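/- For ℓ ≤ k ≤ n, there exists an ℓ-disjoint k-uniform hypergraph on n vertices with at least ⌈C(n,ℓ)/C(k,ℓ)²⌉ edges. -/

import Mathlib

/-- For ℓ ≤ k ≤ n there exists an ℓ-disjoint k-uniform hypergraph on n vertices
with at least ⌈C(n,ℓ)/C(k,ℓ)²⌉ edges. -/
theorem stmt1 (n k ℓ : ℕ) (hlk : ℓ ≤ k) (hkn : k ≤ n) :
    ∃ H : Finset (Finset ℕ),
      (∀ A ∈ H, A ⊆ Finset.range n ∧ A.card = k) ∧
      (∀ A ∈ H, ∀ B ∈ H, A ≠ B → (A ∩ B).card < ℓ) ∧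
      (⌈(n.choose ℓ : ℚ) / (k.choose ℓ : ℚ) ^ 2⌉ : ℤ) ≤ H.card := by
  classical
  set Ω : Finset (Finset ℕ) := (Finset.range n).powersetCard k with hΩ
  set S : Finset (Finset (Finset ℕ)) :=
    Ω.powerset.filter (fun H => ∀ A ∈ H, ∀ B ∈ H, A ≠ B → (A ∩ B).card < ℓ) with hS
  have hne : S.Nonempty := ⟨∅, by simp [hS]⟩
  obtain ⟨H, hHS, hmax⟩ := S.exists_max_image Finset.card hne
  rw [hS, Finset.mem_filter, Finset.mem_powerset] at hHS
  obtain ⟨hHΩ, hdisj⟩ := hHS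
  have hmem : ∀ A ∈ H, A ⊆ Finset.range n ∧ A.card = k := by
    intro A hA
    have := hHΩ hA
    rw [hΩ, Finset.mem_powersetCard] at this
    exact this
  refine ⟨H, hmem, hdisj, ?_⟩
  -- maximality: every K in Ω meets some A ∈ H in ≥ ℓ points
  have hcover : ∀ K ∈ Ω, ∃ A ∈ H, ℓ ≤ (K ∩ A).card := by
    intro K hK
    by_contra hcon
    push_neg at hcon
    have hKH : K ∉ H := by
      intro hKmem
      have := hcon K hKmem
      have hKcard : K.card = k := (Finset.mem_powersetCard.mp hK).2
      simp [Finset.inter_self, hKcard] at this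
      omega
    have hins : insert K H ∈ S := by
      rw [hS, Finset.mem_filter, Finset.mem_powerset]
      constructor
      · exact Finset.insert_subset hK hHΩ
      · intro A hA B hB hAB
        rcases Finset.mem_insert.mp hA with hAK | hA
        · rcases Finset.mem_insert.mp hB with hBK | hB
          · exact absurd (hAK.trans hBK.symm) hAB
          · rw [hAK]; exact hcon B hB
        · rcases Finset.mem_insert.mp hB with hBK | hB
          · rw [hBK, Finset.inter_comm]; exact hcon A hA
          · exact hdisj A hA B hB hAB
    have := hmax _ hins
    rw [Finset.card_insert_of_notMem hKH] at this
    omega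
  -- the key counting family
  set t : Finset ((_ : Finset ℕ) × Finset ℕ) := H.sigma (fun A => A.powersetCard ℓ) with ht
  have hsub : Ω ⊆ t.biUnion (fun p => Ω.filter (fun K => p.2 ⊆ K)) := by
    intro K hK
    obtain ⟨A, hA, hcard⟩ := hcover K hK
    obtain ⟨L, hL, hLcard⟩ := Finset.exists_subset_card_eq hcard
    refine Finset.mem_biUnion.mpr ⟨⟨A, L⟩, ?_, ?_⟩
    · rw [ht, Finset.mem_sigma, Finset.mem_powersetCard]
      exact ⟨hA, hL.trans Finset.inter_subset_right, hLcard⟩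
    · exact Finset.mem_filter.mpr ⟨hK, hL.trans Finset.inter_subset_left⟩
  have hfiber : ∀ p ∈ t, (Ω.filter (fun K => p.2 ⊆ K)).card ≤ (n - ℓ).choose (k - ℓ) := by
    intro p hp
    rw [ht, Finset.mem_sigma, Finset.mem_powersetCard] at hp
    obtain ⟨hp1, hp2sub, hp2card⟩ := hp
    have hp2range : p.2 ⊆ Finset.range n := hp2sub.trans (hmem _ hp1).1
    have := Finset.card_le_card_of_injOn (fun K => K \ p.2)
      (s := Ω.filter (fun K => p.2 ⊆ K))
      (t := (Finset.range n \ p.2).powersetCard (k - ℓ)) ?_ ?_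
    · refine this.trans_eq ?_
      rw [Finset.card_powersetCard, Finset.card_sdiff_of_subset hp2range, Finset.card_range, hp2card]
    · intro K hK
      rw [Finset.mem_coe, Finset.mem_filter, hΩ, Finset.mem_powersetCard] at hK
      obtain ⟨⟨hKr, hKc⟩, hpK⟩ := hK
      rw [Finset.mem_coe, Finset.mem_powersetCard]
      exact ⟨Finset.sdiff_subset_sdiff hKr le_rfl,
        by rw [Finset.card_sdiff_of_subset hpK, hKc, hp2card]⟩
    · intro K1 h1 K2 h2 heq
      rw [Finset.mem_coe, Finset.mem_filter] at h1 h2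
      have e1 : K1 = K1 \ p.2 ∪ p.2 := by
        rw [Finset.sdiff_union_of_subset h1.2]
      have e2 : K2 = K2 \ p.2 ∪ p.2 := by
        rw [Finset.sdiff_union_of_subset h2.2]
      dsimp only at heq
      rw [e1, e2, heq]
  have htcard : t.card = H.card * k.choose ℓ := by
    rw [ht, Finset.card_sigma]
    rw [Finset.sum_congr rfl (fun A hA => by
      rw [Finset.card_powersetCard, (hmem A hA).2])]
    rw [Finset.sum_const, smul_eq_mul]
  have hΩcard : Ω.card = n.choose k := by
    rw [hΩ, Finset.card_powersetCard, Finset.card_range]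
  have hkey : n.choose k ≤ H.card * k.choose ℓ * (n - ℓ).choose (k - ℓ) := by
    calc n.choose k = Ω.card := hΩcard.symm
      _ ≤ (t.biUnion (fun p => Ω.filter (fun K => p.2 ⊆ K))).card :=
          Finset.card_le_card hsub
      _ ≤ ∑ p ∈ t, (Ω.filter (fun K => p.2 ⊆ K)).card := Finset.card_biUnion_le
      _ ≤ ∑ _p ∈ t, (n - ℓ).choose (k - ℓ) := Finset.sum_le_sum hfiber
      _ = t.card * (n - ℓ).choose (k - ℓ) := by rw [Finset.sum_const, smul_eq_mul]
      _ = H.card * k.choose ℓ * (n - ℓ).choose (k - ℓ) := by rw [htcard]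
  -- deduce C(n,ℓ) ≤ |H| * C(k,ℓ)^2
  have hid : n.choose k * k.choose ℓ = n.choose ℓ * (n - ℓ).choose (k - ℓ) :=
    Nat.choose_mul hlk
  have hpos : 0 < (n - ℓ).choose (k - ℓ) :=
    Nat.choose_pos (Nat.sub_le_sub_right hkn ℓ)
  have hnat : n.choose ℓ ≤ H.card * k.choose ℓ ^ 2 := by
    have h2 : n.choose ℓ * (n - ℓ).choose (k - ℓ) ≤
        H.card * k.choose ℓ ^ 2 * (n - ℓ).choose (k - ℓ) := by
      calc n.choose ℓ * (n - ℓ).choose (k - ℓ) = n.choose k * k.choose ℓ := hid.symm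
        _ ≤ H.card * k.choose ℓ * (n - ℓ).choose (k - ℓ) * k.choose ℓ :=
            Nat.mul_le_mul_right _ hkey
        _ = H.card * k.choose ℓ ^ 2 * (n - ℓ).choose (k - ℓ) := by ring
    exact Nat.le_of_mul_le_mul_right h2 hpos
  have hclt : (0 : ℚ) < (k.choose ℓ : ℚ) ^ 2 := by
    have := Nat.choose_pos hlk
    positivity
  rw [Int.ceil_le]
  rw [div_le_iff₀ hclt]
  push_cast
  exact_mod_cast hnat
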